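/- Let n ≥ 1 be an integer and α, β ∈ ℂ. Then ∫₀¹ [ n(n+1) j_n(α r) j_n(β r) + 𝒥_n(α r) 𝒥_n(β r) ] dr = (α β/(2n+1)) · [ (n+1) ∫₀¹ j_{n−1}(α r) j_{n−1}(β r) r² dr + n ∫₀¹ j_{n+1}(α r) j_{n+1}(β r) r² dr ]. -/

import Mathlib

open Complex Real Filter

/-- Spherical Bessel function of the first kind of order `n`, as an entire function. -/
noncomputable def sphJ (n : ℕ) (z : ℂ) : ℂ :=
  ∑' m : ℕ, ((-1 : ℂ) ^ m * z ^ (n + 2 * m)) /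
    ((2 : ℂ) ^ m * (m.factorial : ℂ) * (Nat.doubleFactorial (2 * n + 2 * m + 1) : ℂ))

/-- Spherical Hankel function of the first kind of order `n` (for `z ≠ 0`). -/
noncomputable def sphH (n : ℕ) (z : ℂ) : ℂ :=
  (-Complex.I) ^ (n + 1) * Complex.exp (Complex.I * z) / z *
    ∑ m ∈ Finset.range (n + 1),
      (Complex.I ^ m * ((n + m).factorial : ℂ)) /
        ((m.factorial : ℂ) * (2 * z) ^ m * ((n - m).factorial : ℂ))

/-- `𝒥_n(z) = j_n(z) + z j_n'(z)`. -/
noncomputable def calJ (n : ℕ) (z : ℂ) : ℂ := sphJ n z + z * deriv (sphJ n) z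

/-- `ℋ_n(z) = h_n^{(1)}(z) + z (h_n^{(1)})'(z)`. -/
noncomputable def calH (n : ℕ) (z : ℂ) : ℂ := sphH n z + z * deriv (sphH n) z

/-- `f_n^1(z) = h_n^{(1)}(k) 𝒥_n(z) − j_n(z) ℋ_n(k)`. -/
noncomputable def f1 (n : ℕ) (k : ℝ) (z : ℂ) : ℂ :=
  sphH n (k : ℂ) * calJ n z - sphJ n z * calH n (k : ℂ)

/-- `f_n^2(z) = (k²/z²) h_n^{(1)}(k) 𝒥_n(z) − j_n(z) ℋ_n(k)`. -/
noncomputable def f2 (n : ℕ) (k : ℝ) (z : ℂ) : ℂ :=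
  ((k : ℂ) ^ 2 / z ^ 2) * sphH n (k : ℂ) * calJ n z - sphJ n z * calH n (k : ℂ)

/-- `z̃¹_{n,l} = (1 + 2l + n)π/2`. -/
noncomputable def zt1 (n l : ℕ) : ℂ := ((1 + 2 * l + n : ℕ) : ℂ) * (Real.pi : ℂ) / 2

/-- `z̃²_{n,l} = (2l + n)π/2`. -/
noncomputable def zt2 (n l : ℕ) : ℂ := ((2 * l + n : ℕ) : ℂ) * (Real.pi : ℂ) / 2

/-- `g_n(w) = 𝒥_n(w)/w`, extended through the removable singularity at `w = 0`. -/
noncomputable def gfun (n : ℕ) (w : ℂ) : ℂ :=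
  if w = 0 then deriv (calJ n) 0 else calJ n w / w

namespace Stmt17Aux

noncomputable def coef (n m : ℕ) : ℂ :=
  ((-1 : ℂ) ^ m) /
    ((2 : ℂ) ^ m * (m.factorial : ℂ) * (Nat.doubleFactorial (2 * n + 2 * m + 1) : ℂ))

lemma sphJ_eq_tsum (n : ℕ) (z : ℂ) : sphJ n z = ∑' m, coef n m * z ^ (n + 2 * m) := by
  unfold sphJ coef
  exact tsum_congr fun m => by ring

lemma norm_coef_le (n m : ℕ) : ‖coef n m‖ ≤ 1 / (2 ^ m * m.factorial) := by
  unfold coef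
  have hden : ((2 : ℂ) ^ m * (m.factorial : ℂ) *
      (Nat.doubleFactorial (2 * n + 2 * m + 1) : ℂ)) =
      ((2 ^ m * m.factorial * Nat.doubleFactorial (2 * n + 2 * m + 1) : ℕ) : ℂ) := by
    push_cast; ring
  rw [norm_div, norm_pow, norm_neg, norm_one, one_pow, hden, Complex.norm_natCast]
  have h1 : (0:ℝ) < 2 ^ m * m.factorial := by positivity
  have h2 : (2 ^ m * m.factorial : ℝ) ≤ ((2 ^ m * m.factorial * Nat.doubleFactorial (2 * n + 2 * m + 1) : ℕ) : ℝ) := by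
    push_cast
    nlinarith [Nat.doubleFactorial_pos (2 * n + 2 * m + 1),
      (Nat.one_le_iff_ne_zero.2 (Nat.doubleFactorial_pos (2 * n + 2 * m + 1)).ne' : 1 ≤ Nat.doubleFactorial (2 * n + 2 * m + 1)),
      (by exact_mod_cast Nat.one_le_iff_ne_zero.2 (Nat.doubleFactorial_pos (2 * n + 2 * m + 1)).ne' : (1:ℝ) ≤ (Nat.doubleFactorial (2 * n + 2 * m + 1) : ℝ)), h1]
  exact one_div_le_one_div_of_le h1 h2

lemma summable_aux (c : ℕ) (q : ℝ) (hq : 0 ≤ q) :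
    Summable (fun m : ℕ => ((c : ℝ) + 2 * m) * q ^ m / m.factorial) := by
  have h := (Real.summable_pow_div_factorial (2 * q)).mul_left ((c : ℝ) + 2)
  refine Summable.of_nonneg_of_le (fun m => by positivity) (fun m => ?_) h
  have hm : (m : ℝ) ≤ 2 ^ m := by exact_mod_cast (Nat.lt_two_pow_self (n := m)).le
  have h1 : (1:ℝ) ≤ 2 ^ m := one_le_pow₀ (by norm_num)
  have h2 : ((c : ℝ) + 2 * m) ≤ ((c : ℝ) + 2) * 2 ^ m := by nlinarith [Nat.cast_nonneg (α := ℝ) c]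
  calc ((c : ℝ) + 2 * m) * q ^ m / m.factorial
      ≤ (((c : ℝ) + 2) * 2 ^ m) * q ^ m / m.factorial := by gcongr
    _ = ((c : ℝ) + 2) * ((2 * q) ^ m / m.factorial) := by rw [mul_pow]; ring

lemma summable_gen (n : ℕ) (z : ℂ) (c : ℕ → ℂ)
    (hc : ∀ m, ‖c m‖ ≤ (n : ℝ) + 2 * m + 2) :
    Summable (fun m => c m * coef n m * z ^ (n + 2 * m)) := by
  refine Summable.of_norm ?_
  have hs := ((summable_aux (n + 2) (‖z‖ ^ 2 / 2) (by positivity)).mul_left (‖z‖ ^ n))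
  refine Summable.of_nonneg_of_le (fun m => norm_nonneg _) (fun m => ?_) hs
  have h1 : ‖c m * coef n m * z ^ (n + 2 * m)‖ = ‖c m‖ * ‖coef n m‖ * ‖z‖ ^ (n + 2 * m) := by
    rw [norm_mul, norm_mul, norm_pow]
  have hz : ‖z‖ ^ (n + 2 * m) = ‖z‖ ^ n * (‖z‖ ^ 2) ^ m := by
    rw [← pow_mul, ← pow_add]
  rw [h1, hz]
  have hfac : (0:ℝ) < 2 ^ m * m.factorial := by positivity
  have h2 : ‖c m‖ * ‖coef n m‖ ≤ ((n : ℝ) + 2 * m + 2) / (2 ^ m * m.factorial) := by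
    calc ‖c m‖ * ‖coef n m‖ ≤ ((n : ℝ) + 2 * m + 2) * (1 / (2 ^ m * m.factorial)) :=
          mul_le_mul (hc m) (norm_coef_le n m) (norm_nonneg _) (by positivity)
      _ = _ := by ring
  calc ‖c m‖ * ‖coef n m‖ * (‖z‖ ^ n * (‖z‖ ^ 2) ^ m)
      ≤ (((n : ℝ) + 2 * m + 2) / (2 ^ m * m.factorial)) * (‖z‖ ^ n * (‖z‖ ^ 2) ^ m) := by
        exact mul_le_mul_of_nonneg_right h2 (by positivity)
    _ = ‖z‖ ^ n * ((((n + 2 : ℕ) : ℝ) + 2 * m) * (‖z‖ ^ 2 / 2) ^ m / m.factorial) := by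
        rw [div_pow]; push_cast; field_simp; ring

lemma hasDerivAt_sphJ (n : ℕ) (z : ℂ) :
    HasDerivAt (sphJ n)
      (∑' m, coef n m * (((n + 2 * m : ℕ) : ℂ) * z ^ (n + 2 * m - 1))) z := by
  set R : ℝ := ‖z‖ + 1 with hRdef
  have hR0 : (0:ℝ) < R := by positivity
  have hR1 : (1:ℝ) ≤ R := by simp only [hRdef]; linarith [norm_nonneg z]
  have key : HasDerivAt (fun y => ∑' m, coef n m * y ^ (n + 2 * m))
      (∑' m, coef n m * (((n + 2 * m : ℕ) : ℂ) * z ^ (n + 2 * m - 1))) z := by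
    refine hasDerivAt_tsum_of_isPreconnected
      (u := fun m : ℕ => R ^ n * (((n : ℝ) + 2 * m) * (R ^ 2 / 2) ^ m / m.factorial))
      ((summable_aux n (R ^ 2 / 2) (by positivity)).mul_left _)
      (Metric.isOpen_ball (x := (0:ℂ)) (ε := R))
      (Convex.isPreconnected (convex_ball 0 R))
      (fun m y _ => (hasDerivAt_pow (n + 2 * m) y).const_mul (coef n m))
      (fun m y hy => ?_) (Metric.mem_ball_self hR0) ?_ ?_
    · have hy' : ‖y‖ ≤ R := le_of_lt (by simpa using hy)
      have hy0 : (0:ℝ) ≤ ‖y‖ := norm_nonneg _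
      have hnorm : ‖coef n m * (((n + 2 * m : ℕ) : ℂ) * y ^ (n + 2 * m - 1))‖
          = ‖coef n m‖ * (((n + 2 * m : ℕ) : ℝ) * ‖y‖ ^ (n + 2 * m - 1)) := by
        rw [norm_mul, norm_mul, norm_pow, Complex.norm_natCast]
      rw [hnorm]
      have hpow : ‖y‖ ^ (n + 2 * m - 1) ≤ R ^ n * (R ^ 2) ^ m := by
        calc ‖y‖ ^ (n + 2 * m - 1) ≤ R ^ (n + 2 * m - 1) := by gcongr
          _ ≤ R ^ (n + 2 * m) := pow_le_pow_right₀ hR1 (by omega)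
          _ = R ^ n * (R ^ 2) ^ m := by rw [← pow_mul, ← pow_add]
      have hfac : (0:ℝ) < 2 ^ m * m.factorial := by positivity
      calc ‖coef n m‖ * (((n + 2 * m : ℕ) : ℝ) * ‖y‖ ^ (n + 2 * m - 1))
          ≤ (1 / (2 ^ m * m.factorial)) * (((n + 2 * m : ℕ) : ℝ) * (R ^ n * (R ^ 2) ^ m)) := by
            refine mul_le_mul (norm_coef_le n m) ?_ (by positivity) (by positivity)
            exact mul_le_mul_of_nonneg_left hpow (by positivity)
        _ = R ^ n * (((n : ℝ) + 2 * m) * (R ^ 2 / 2) ^ m / m.factorial) := by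
            rw [div_pow]; push_cast; field_simp
    · refine summable_of_ne_finset_zero (s := {0}) (fun m hm => ?_)
      simp only [Finset.mem_singleton] at hm
      rw [zero_pow (by omega : n + 2 * m ≠ 0), mul_zero]
    · refine Metric.mem_ball.2 ?_
      rw [dist_zero_right]
      simp only [hRdef]
      linarith
  have hfun : sphJ n = fun y => ∑' m, coef n m * y ^ (n + 2 * m) := funext fun y => sphJ_eq_tsum n y
  rw [hfun]
  exact key

lemma summable_sphJ (n : ℕ) (z : ℂ) : Summable (fun m => coef n m * z ^ (n + 2 * m)) := by
  have h := summable_gen n z (fun _ => 1) (fun m => by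
    simp only [norm_one]
    have : (0:ℝ) ≤ (n : ℝ) + 2 * m := by positivity
    linarith)
  simpa using h

lemma continuous_sphJ (n : ℕ) : Continuous (sphJ n) :=
  continuous_iff_continuousAt.2 fun z => (hasDerivAt_sphJ n z).continuousAt

lemma mul_pow_pred (z c : ℂ) (n m : ℕ) :
    z * (coef n m * (((n + 2 * m : ℕ) : ℂ) * z ^ (n + 2 * m - 1)))
      = ((n : ℂ) + 2 * m) * coef n m * z ^ (n + 2 * m) := by
  rcases Nat.eq_zero_or_pos (n + 2 * m) with h | h
  · have hn : n = 0 := by omega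
    have hm : m = 0 := by omega
    subst hn; subst hm; simp
  · have he : n + 2 * m - 1 + 1 = n + 2 * m := by omega
    rw [← he, pow_succ]
    push_cast [he]
    ring

lemma calJ_eq (n : ℕ) (z : ℂ) :
    calJ n z = ∑' m, ((n : ℂ) + 2 * m + 1) * coef n m * z ^ (n + 2 * m) := by
  unfold calJ
  rw [(hasDerivAt_sphJ n z).deriv, sphJ_eq_tsum, ← tsum_mul_left]
  have h1 : (fun m => z * (coef n m * (((n + 2 * m : ℕ) : ℂ) * z ^ (n + 2 * m - 1))))
      = fun m => ((n : ℂ) + 2 * m) * coef n m * z ^ (n + 2 * m) := funext fun m => mul_pow_pred z (coef n m) n m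
  rw [h1]
  have hB : Summable (fun m => ((n : ℂ) + 2 * m) * coef n m * z ^ (n + 2 * m)) := by
    refine summable_gen n z _ (fun m => ?_)
    have : ((n : ℂ) + 2 * m) = ((n + 2 * m : ℕ) : ℂ) := by push_cast; ring
    rw [this, Complex.norm_natCast]
    push_cast
    linarith
  rw [← Summable.tsum_add (summable_sphJ n z) hB]
  exact tsum_congr fun m => by ring

lemma df_ne (j : ℕ) : ((Nat.doubleFactorial j : ℕ) : ℂ) ≠ 0 :=
  Nat.cast_ne_zero.2 (Nat.doubleFactorial_pos j).ne'

lemma fact_ne (m : ℕ) : ((m.factorial : ℕ) : ℂ) ≠ 0 :=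
  Nat.cast_ne_zero.2 m.factorial_ne_zero

lemma coefrec_base (k : ℕ) : (2 * (k : ℂ) + 3) * coef (k + 1) 0 = coef k 0 := by
  unfold coef
  have h1 : 2 * (k + 1) + 2 * 0 + 1 = 2 * k + 2 * 0 + 1 + 2 := by omega
  rw [h1, Nat.doubleFactorial_add_two, Nat.cast_mul]
  have hd := df_ne (2 * k + 2 * 0 + 1)
  have h5 : ((2 * k + 2 * 0 + 1 + 2 : ℕ) : ℂ) ≠ 0 := Nat.cast_ne_zero.2 (by omega)
  have hW : ((2 * k + 2 * 0 + 1 + 2 : ℕ) : ℂ) = 2 * (k:ℂ) + 3 := by push_cast; ring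
  rw [hW]
  rw [← mul_div_assoc, div_eq_div_iff (by
      refine mul_ne_zero (mul_ne_zero ?_ ?_) (mul_ne_zero ?_ hd)
      · exact pow_ne_zero _ two_ne_zero
      · exact fact_ne 0
      · rw [← hW]; exact h5) (by
      refine mul_ne_zero (mul_ne_zero ?_ ?_) hd
      · exact pow_ne_zero _ two_ne_zero
      · exact fact_ne 0)]
  ring

lemma coefrec1 (k m : ℕ) :
    (2 * (k : ℂ) + 3) * coef (k + 1) (m + 1) = coef k (m + 1) + coef (k + 2) m := by
  unfold coef
  have h1 : 2 * (k + 1) + 2 * (m + 1) + 1 = 2 * k + 2 * m + 3 + 2 := by omega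
  have h2 : 2 * k + 2 * (m + 1) + 1 = 2 * k + 2 * m + 3 := by omega
  have h3 : 2 * (k + 2) + 2 * m + 1 = 2 * k + 2 * m + 3 + 2 := by omega
  rw [h1, h2, h3, Nat.doubleFactorial_add_two, Nat.factorial_succ, pow_succ, pow_succ,
    Nat.cast_mul, Nat.cast_mul]
  have hd := df_ne (2 * k + 2 * m + 3)
  have hf := fact_ne m
  have h2m : ((2:ℂ)) ^ m ≠ 0 := pow_ne_zero _ two_ne_zero
  have hW : ((2 * k + 2 * m + 3 + 2 : ℕ) : ℂ) = 2 * (k:ℂ) + 2 * m + 5 := by push_cast; ring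
  have hU : ((m + 1 : ℕ) : ℂ) = (m:ℂ) + 1 := by push_cast; ring
  have h5 : (2 * (k:ℂ) + 2 * m + 5) ≠ 0 := by
    rw [← hW]; exact Nat.cast_ne_zero.2 (by omega)
  have hm1 : ((m:ℂ) + 1) ≠ 0 := by
    rw [← hU]; exact Nat.cast_ne_zero.2 (by omega)
  rw [hW, hU]
  have hdenA : (2:ℂ) ^ m * 2 * (((m:ℂ) + 1) * (m.factorial : ℂ)) *
      ((2 * (k:ℂ) + 2 * m + 5) * (Nat.doubleFactorial (2 * k + 2 * m + 3) : ℂ)) ≠ 0 :=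
    mul_ne_zero (mul_ne_zero (mul_ne_zero h2m two_ne_zero) (mul_ne_zero hm1 hf))
      (mul_ne_zero h5 hd)
  have hdenB : (2:ℂ) ^ m * 2 * (((m:ℂ) + 1) * (m.factorial : ℂ)) *
      (Nat.doubleFactorial (2 * k + 2 * m + 3) : ℂ) ≠ 0 :=
    mul_ne_zero (mul_ne_zero (mul_ne_zero h2m two_ne_zero) (mul_ne_zero hm1 hf)) hd
  have hdenC : (2:ℂ) ^ m * (m.factorial : ℂ) *
      ((2 * (k:ℂ) + 2 * m + 5) * (Nat.doubleFactorial (2 * k + 2 * m + 3) : ℂ)) ≠ 0 :=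
    mul_ne_zero (mul_ne_zero h2m hf) (mul_ne_zero h5 hd)
  rw [← mul_div_assoc, div_add_div _ _ hdenB hdenC,
    div_eq_div_iff hdenA (mul_ne_zero hdenB hdenC)]
  ring

lemma coefrec2 (k m : ℕ) :
    (2 * (k : ℂ) + 3) * ((k : ℂ) + 2 * m + 4) * coef (k + 1) (m + 1)
      = ((k : ℂ) + 2) * coef k (m + 1) - ((k : ℂ) + 1) * coef (k + 2) m := by
  unfold coef
  have h1 : 2 * (k + 1) + 2 * (m + 1) + 1 = 2 * k + 2 * m + 3 + 2 := by omega
  have h2 : 2 * k + 2 * (m + 1) + 1 = 2 * k + 2 * m + 3 := by omega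
  have h3 : 2 * (k + 2) + 2 * m + 1 = 2 * k + 2 * m + 3 + 2 := by omega
  rw [h1, h2, h3, Nat.doubleFactorial_add_two, Nat.factorial_succ, pow_succ, pow_succ,
    Nat.cast_mul, Nat.cast_mul]
  have hd := df_ne (2 * k + 2 * m + 3)
  have hf := fact_ne m
  have h2m : ((2:ℂ)) ^ m ≠ 0 := pow_ne_zero _ two_ne_zero
  have hW : ((2 * k + 2 * m + 3 + 2 : ℕ) : ℂ) = 2 * (k:ℂ) + 2 * m + 5 := by push_cast; ring
  have hU : ((m + 1 : ℕ) : ℂ) = (m:ℂ) + 1 := by push_cast; ring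
  have h5 : (2 * (k:ℂ) + 2 * m + 5) ≠ 0 := by
    rw [← hW]; exact Nat.cast_ne_zero.2 (by omega)
  have hm1 : ((m:ℂ) + 1) ≠ 0 := by
    rw [← hU]; exact Nat.cast_ne_zero.2 (by omega)
  rw [hW, hU]
  have hdenA : (2:ℂ) ^ m * 2 * (((m:ℂ) + 1) * (m.factorial : ℂ)) *
      ((2 * (k:ℂ) + 2 * m + 5) * (Nat.doubleFactorial (2 * k + 2 * m + 3) : ℂ)) ≠ 0 :=
    mul_ne_zero (mul_ne_zero (mul_ne_zero h2m two_ne_zero) (mul_ne_zero hm1 hf))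
      (mul_ne_zero h5 hd)
  have hdenB : (2:ℂ) ^ m * 2 * (((m:ℂ) + 1) * (m.factorial : ℂ)) *
      (Nat.doubleFactorial (2 * k + 2 * m + 3) : ℂ) ≠ 0 :=
    mul_ne_zero (mul_ne_zero (mul_ne_zero h2m two_ne_zero) (mul_ne_zero hm1 hf)) hd
  have hdenC : (2:ℂ) ^ m * (m.factorial : ℂ) *
      ((2 * (k:ℂ) + 2 * m + 5) * (Nat.doubleFactorial (2 * k + 2 * m + 3) : ℂ)) ≠ 0 :=
    mul_ne_zero (mul_ne_zero h2m hf) (mul_ne_zero h5 hd)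
  simp only [← mul_div_assoc]
  rw [div_sub_div _ _ hdenB hdenC, div_eq_div_iff hdenA (mul_ne_zero hdenB hdenC)]
  ring

lemma zsphJ (n : ℕ) (z : ℂ) : z * sphJ n z = ∑' m, coef n m * z ^ (n + 1 + 2 * m) := by
  rw [sphJ_eq_tsum, ← tsum_mul_left]
  refine tsum_congr fun m => ?_
  rw [show n + 1 + 2 * m = (n + 2 * m) + 1 from by omega, pow_succ]
  ring

lemma summable_z (n : ℕ) (z : ℂ) : Summable (fun m => coef n m * z ^ (n + 1 + 2 * m)) := by
  refine ((summable_sphJ n z).mul_left z).congr fun m => ?_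
  rw [show n + 1 + 2 * m = (n + 2 * m) + 1 from by omega, pow_succ]
  ring

lemma recJ (k : ℕ) (z : ℂ) :
    z * sphJ (k + 2) z = (2 * (k : ℂ) + 3) * sphJ (k + 1) z - z * sphJ k z := by
  have hA : Summable (fun m => (2 * (k : ℂ) + 3) * (coef (k + 1) m * z ^ (k + 1 + 2 * m))) :=
    (summable_sphJ (k + 1) z).mul_left _
  have hB : Summable (fun m => coef k m * z ^ (k + 1 + 2 * m)) := summable_z k z
  set E : ℕ → ℂ := fun m =>
    (2 * (k : ℂ) + 3) * (coef (k + 1) m * z ^ (k + 1 + 2 * m)) - coef k m * z ^ (k + 1 + 2 * m)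
    with hEdef
  have hE : Summable E := hA.sub hB
  have hE0 : E 0 = 0 := by
    simp only [hEdef]
    have := coefrec_base k
    linear_combination z ^ (k + 1 + 2 * 0) * this
  have hEs : ∀ m, E (m + 1) = coef (k + 2) m * z ^ (k + 2 + 1 + 2 * m) := by
    intro m
    simp only [hEdef]
    have h := coefrec1 k m
    have he : k + 1 + 2 * (m + 1) = k + 2 + 1 + 2 * m := by omega
    rw [he]
    linear_combination z ^ (k + 2 + 1 + 2 * m) * h
  calc z * sphJ (k + 2) z = ∑' m, coef (k + 2) m * z ^ (k + 2 + 1 + 2 * m) := zsphJ (k + 2) z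
    _ = ∑' m, E (m + 1) := tsum_congr fun m => (hEs m).symm
    _ = E 0 + ∑' m, E (m + 1) := by rw [hE0, zero_add]
    _ = ∑' m, E m := (Summable.tsum_eq_zero_add hE).symm
    _ = (∑' m, (2 * (k : ℂ) + 3) * (coef (k + 1) m * z ^ (k + 1 + 2 * m)))
          - ∑' m, coef k m * z ^ (k + 1 + 2 * m) := Summable.tsum_sub hA hB
    _ = (2 * (k : ℂ) + 3) * sphJ (k + 1) z - z * sphJ k z := by
        rw [tsum_mul_left, ← sphJ_eq_tsum, ← zsphJ]

lemma calJ_term_eq (k : ℕ) (z : ℂ) :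
    calJ (k + 1) z = ∑' m, (((k:ℂ) + 2 * m + 2) * coef (k + 1) m) * z ^ (k + 1 + 2 * m) := by
  rw [calJ_eq]
  refine tsum_congr fun m => ?_
  push_cast
  ring

lemma summable_calJ_term (k : ℕ) (z : ℂ) :
    Summable (fun m => (((k:ℂ) + 2 * m + 2) * coef (k + 1) m) * z ^ (k + 1 + 2 * m)) := by
  refine (summable_gen (k + 1) z (fun m => (k:ℂ) + 2 * m + 2) fun m => ?_)
  show ‖(k : ℂ) + 2 * m + 2‖ ≤ _
  have : ((k : ℂ) + 2 * m + 2) = ((k + 2 * m + 2 : ℕ) : ℂ) := by push_cast; ring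
  rw [this, Complex.norm_natCast]
  push_cast
  linarith

lemma recCalJ (k : ℕ) (z : ℂ) :
    ((k : ℂ) + 1) * (z * sphJ (k + 2) z)
      = ((k : ℂ) + 2) * (z * sphJ k z) - (2 * (k : ℂ) + 3) * calJ (k + 1) z := by
  have hA : Summable (fun m =>
      (2 * (k : ℂ) + 3) * ((((k:ℂ) + 2 * m + 2) * coef (k + 1) m) * z ^ (k + 1 + 2 * m))) :=
    (summable_calJ_term k z).mul_left _
  have hB : Summable (fun m => ((k : ℂ) + 2) * (coef k m * z ^ (k + 1 + 2 * m))) :=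
    (summable_z k z).mul_left _
  set E : ℕ → ℂ := fun m =>
    ((k : ℂ) + 2) * (coef k m * z ^ (k + 1 + 2 * m))
      - (2 * (k : ℂ) + 3) * ((((k:ℂ) + 2 * m + 2) * coef (k + 1) m) * z ^ (k + 1 + 2 * m))
    with hEdef
  have hE : Summable E := hB.sub hA
  have hE0 : E 0 = 0 := by
    simp only [hEdef]
    have := coefrec_base k
    linear_combination (-((k:ℂ) + 2)) * z ^ (k + 1 + 2 * 0) * this
  have hEs : ∀ m, E (m + 1) = ((k : ℂ) + 1) * (coef (k + 2) m * z ^ (k + 2 + 1 + 2 * m)) := by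
    intro m
    simp only [hEdef]
    have h := coefrec2 k m
    have he : k + 1 + 2 * (m + 1) = k + 2 + 1 + 2 * m := by omega
    rw [he]
    push_cast
    linear_combination (-(z : ℂ) ^ (k + 2 + 1 + 2 * m)) * h
  calc ((k : ℂ) + 1) * (z * sphJ (k + 2) z)
      = ((k : ℂ) + 1) * ∑' m, coef (k + 2) m * z ^ (k + 2 + 1 + 2 * m) := by rw [zsphJ]
    _ = ∑' m, ((k : ℂ) + 1) * (coef (k + 2) m * z ^ (k + 2 + 1 + 2 * m)) := (tsum_mul_left).symm
    _ = ∑' m, E (m + 1) := tsum_congr fun m => (hEs m).symm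
    _ = E 0 + ∑' m, E (m + 1) := by rw [hE0, zero_add]
    _ = ∑' m, E m := (Summable.tsum_eq_zero_add hE).symm
    _ = (∑' m, ((k : ℂ) + 2) * (coef k m * z ^ (k + 1 + 2 * m)))
          - ∑' m, (2 * (k : ℂ) + 3) * ((((k:ℂ) + 2 * m + 2) * coef (k + 1) m) * z ^ (k + 1 + 2 * m)) :=
        Summable.tsum_sub hB hA
    _ = ((k : ℂ) + 2) * (z * sphJ k z) - (2 * (k : ℂ) + 3) * calJ (k + 1) z := by
        rw [tsum_mul_left, tsum_mul_left, ← zsphJ, ← calJ_term_eq]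

lemma pointwise (k : ℕ) (a b : ℂ) :
    ((k : ℂ) + 1) * ((k : ℂ) + 2) * sphJ (k + 1) a * sphJ (k + 1) b
        + calJ (k + 1) a * calJ (k + 1) b
      = (((k : ℂ) + 2) * ((a * sphJ k a) * (b * sphJ k b))
          + ((k : ℂ) + 1) * ((a * sphJ (k + 2) a) * (b * sphJ (k + 2) b))) / (2 * (k : ℂ) + 3) := by
  have hne : (2 * (k : ℂ) + 3) ≠ 0 := by
    have : ((2 * k + 3 : ℕ) : ℂ) ≠ 0 := Nat.cast_ne_zero.2 (by omega)
    push_cast at this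
    exact this
  have hJa : sphJ (k + 1) a = (a * sphJ k a + a * sphJ (k + 2) a) / (2 * (k : ℂ) + 3) := by
    rw [eq_div_iff hne]; linear_combination -(recJ k a)
  have hJb : sphJ (k + 1) b = (b * sphJ k b + b * sphJ (k + 2) b) / (2 * (k : ℂ) + 3) := by
    rw [eq_div_iff hne]; linear_combination -(recJ k b)
  have hCa : calJ (k + 1) a
      = (((k : ℂ) + 2) * (a * sphJ k a) - ((k : ℂ) + 1) * (a * sphJ (k + 2) a)) / (2 * (k : ℂ) + 3) := by
    rw [eq_div_iff hne]; linear_combination recCalJ k a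
  have hCb : calJ (k + 1) b
      = (((k : ℂ) + 2) * (b * sphJ k b) - ((k : ℂ) + 1) * (b * sphJ (k + 2) b)) / (2 * (k : ℂ) + 3) := by
    rw [eq_div_iff hne]; linear_combination recCalJ k b
  rw [hJa, hJb, hCa, hCb]
  have hinv : (2 * (k : ℂ) + 3) * (2 * (k : ℂ) + 3)⁻¹ = 1 := mul_inv_cancel₀ hne
  simp only [div_eq_mul_inv]
  linear_combination ((((k : ℂ) + 2) * ((a * sphJ k a) * (b * sphJ k b))
          + ((k : ℂ) + 1) * ((a * sphJ (k + 2) a) * (b * sphJ (k + 2) b))) * (2 * (k : ℂ) + 3)⁻¹) * hinv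

end Stmt17Aux

open Stmt17Aux

/-- the Lommel-type integral identity. -/
theorem stmt17 (n : ℕ) (hn : 1 ≤ n) (α β : ℂ) :
    (∫ r in (0 : ℝ)..1,
        (((n : ℂ) * ((n : ℂ) + 1)) * sphJ n (α * (r : ℂ)) * sphJ n (β * (r : ℂ)) +
          calJ n (α * (r : ℂ)) * calJ n (β * (r : ℂ)))) =
      (α * β / (2 * (n : ℂ) + 1)) *
        (((n : ℂ) + 1) *
            (∫ r in (0 : ℝ)..1,
              sphJ (n - 1) (α * (r : ℂ)) * sphJ (n - 1) (β * (r : ℂ)) * (r : ℂ) ^ 2) +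
          (n : ℂ) *
            (∫ r in (0 : ℝ)..1,
              sphJ (n + 1) (α * (r : ℂ)) * sphJ (n + 1) (β * (r : ℂ)) * (r : ℂ) ^ 2)) := by
  obtain ⟨k, rfl⟩ : ∃ k, n = k + 1 := ⟨n - 1, by omega⟩
  simp only [Nat.add_sub_cancel]
  have hcont : ∀ j : ℕ, Continuous fun r : ℝ =>
      sphJ j (α * (r : ℂ)) * sphJ j (β * (r : ℂ)) * (r : ℂ) ^ 2 := fun j =>
    (((continuous_sphJ j).comp (continuous_const.mul Complex.continuous_ofReal)).mul
      ((continuous_sphJ j).comp (continuous_const.mul Complex.continuous_ofReal))).mul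
      (Complex.continuous_ofReal.pow 2)
  have i1 : IntervalIntegrable
      (fun r : ℝ => sphJ k (α * (r : ℂ)) * sphJ k (β * (r : ℂ)) * (r : ℂ) ^ 2)
      MeasureTheory.volume 0 1 := (hcont k).intervalIntegrable _ _
  have i2 : IntervalIntegrable
      (fun r : ℝ => sphJ (k + 2) (α * (r : ℂ)) * sphJ (k + 2) (β * (r : ℂ)) * (r : ℂ) ^ 2)
      MeasureTheory.volume 0 1 := (hcont (k + 2)).intervalIntegrable _ _
  have hcast : ((2 * k + 3 : ℕ) : ℂ) = 2 * ((k + 1 : ℕ) : ℂ) + 1 := by push_cast; ring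
  have hne : (2 * ((k + 1 : ℕ) : ℂ) + 1) ≠ 0 := by
    rw [← hcast]; exact Nat.cast_ne_zero.2 (by omega)
  have key : (∫ r in (0 : ℝ)..1,
        ((((k + 1 : ℕ) : ℂ) * (((k + 1 : ℕ) : ℂ) + 1)) * sphJ (k + 1) (α * (r : ℂ)) *
            sphJ (k + 1) (β * (r : ℂ)) +
          calJ (k + 1) (α * (r : ℂ)) * calJ (k + 1) (β * (r : ℂ))))
      = ∫ r in (0 : ℝ)..1,
          (α * β / (2 * ((k + 1 : ℕ) : ℂ) + 1)) *
            ((((k + 1 : ℕ) : ℂ) + 1) *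
                (sphJ k (α * (r : ℂ)) * sphJ k (β * (r : ℂ)) * (r : ℂ) ^ 2) +
              ((k + 1 : ℕ) : ℂ) *
                (sphJ (k + 2) (α * (r : ℂ)) * sphJ (k + 2) (β * (r : ℂ)) * (r : ℂ) ^ 2)) := by
    refine intervalIntegral.integral_congr fun r _ => ?_
    have h := pointwise k (α * (r : ℂ)) (β * (r : ℂ))
    have hne3 : (2 * (k : ℂ) + 3) ≠ 0 := by
      have hc : ((2 * k + 3 : ℕ) : ℂ) = 2 * (k : ℂ) + 3 := by push_cast; ring
      rw [← hc]; exact Nat.cast_ne_zero.2 (by omega)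
    rw [eq_div_iff hne3] at h
    rw [div_mul_eq_mul_div, eq_div_iff hne]
    push_cast
    linear_combination h
  rw [key, intervalIntegral.integral_const_mul,
    intervalIntegral.integral_add (i1.const_mul _) (i2.const_mul _),
    intervalIntegral.integral_const_mul, intervalIntegral.integral_const_mul]
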